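/- For all real x ≥ 0, one has √(x + 1/4) < Γ(x+1)/Γ(x+1/2) ≤ √(x + 1/π) < √(x + 1/2). -/

import Mathlib

open Real Filter Set Topology

noncomputable def wF (x : ℝ) : ℝ := Real.Gamma (x + 1) / Real.Gamma (x + 1 / 2)



lemma wF_pos {x : ℝ} (hx : 0 ≤ x) : 0 < wF x :=
  div_pos (Real.Gamma_pos_of_pos (by linarith)) (Real.Gamma_pos_of_pos (by linarith))

lemma wF_rec {x : ℝ} (hx : 0 ≤ x) :
    wF (x + 1) ^ 2 * (x + 1 / 2) ^ 2 = wF x ^ 2 * (x + 1) ^ 2 := by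
  unfold wF
  have h1 : x + 1 ≠ 0 := by linarith
  have h2 : x + (1:ℝ) / 2 ≠ 0 := by linarith
  have e1 : Real.Gamma (x + 1 + 1) = (x + 1) * Real.Gamma (x + 1) := Real.Gamma_add_one h1
  have e2 : Real.Gamma (x + 1 + 1 / 2) = (x + 1 / 2) * Real.Gamma (x + 1 / 2) := by
    rw [show x + 1 + 1 / 2 = (x + 1 / 2) + 1 by ring, Real.Gamma_add_one h2]
  have g2 : Real.Gamma (x + 1 / 2) ≠ 0 := (Real.Gamma_pos_of_pos (by linarith)).ne'
  rw [e1, e2]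
  field_simp

lemma gamma_midpoint {y : ℝ} (hy : 0 < y) :
    Real.Gamma (y + 1 / 2) ^ 2 ≤ Real.Gamma y * Real.Gamma (y + 1) := by
  have h := Real.convexOn_log_Gamma.2 (Set.mem_Ioi.mpr hy)
      (Set.mem_Ioi.mpr (by linarith : (0:ℝ) < y + 1))
      (by norm_num : (0:ℝ) ≤ 1 / 2) (by norm_num : (0:ℝ) ≤ 1 / 2) (by norm_num)
  simp only [Function.comp_apply, smul_eq_mul] at h
  have e : (1 / 2 : ℝ) * y + (1 / 2) * (y + 1) = y + 1 / 2 := by ring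
  rw [e] at h
  have p0 : 0 < Real.Gamma (y + 1 / 2) := Real.Gamma_pos_of_pos (by linarith)
  have p1 : 0 < Real.Gamma y := Real.Gamma_pos_of_pos hy
  have p2 : 0 < Real.Gamma (y + 1) := Real.Gamma_pos_of_pos (by linarith)
  have : Real.log (Real.Gamma (y + 1 / 2) ^ 2) ≤ Real.log (Real.Gamma y * Real.Gamma (y + 1)) := by
    rw [Real.log_pow, Real.log_mul p1.ne' p2.ne']
    push_cast
    linarith
  exact (Real.log_le_log_iff (by positivity) (by positivity)).mp this

lemma wF_sq_ge {x : ℝ} (hx : 0 < x) : x ≤ wF x ^ 2 := by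
  have hm := gamma_midpoint hx
  have e1 : Real.Gamma (x + 1) = x * Real.Gamma x := Real.Gamma_add_one hx.ne'
  have p0 : 0 < Real.Gamma (x + 1 / 2) := Real.Gamma_pos_of_pos (by linarith)
  have p1 : 0 < Real.Gamma x := Real.Gamma_pos_of_pos hx
  unfold wF
  rw [div_pow, le_div_iff₀ (by positivity)]
  calc x * Real.Gamma (x + 1 / 2) ^ 2 ≤ x * (Real.Gamma x * Real.Gamma (x + 1)) := by
        apply mul_le_mul_of_nonneg_left hm hx.le
    _ = Real.Gamma (x + 1) ^ 2 := by rw [e1]; ring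

lemma wF_sq_le {x : ℝ} (hx : 0 ≤ x) : wF x ^ 2 ≤ x + 1 / 2 := by
  have hm := gamma_midpoint (show (0:ℝ) < x + 1 / 2 by linarith)
  have e0 : x + 1 / 2 + 1 / 2 = x + 1 := by ring
  have e1 : Real.Gamma (x + 1 / 2 + 1) = (x + 1 / 2) * Real.Gamma (x + 1 / 2) :=
    Real.Gamma_add_one (by linarith)
  rw [e0, e1] at hm
  have p0 : 0 < Real.Gamma (x + 1 / 2) := Real.Gamma_pos_of_pos (by linarith)
  unfold wF
  rw [div_pow, div_le_iff₀ (by positivity)]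
  nlinarith [hm, sq_nonneg (Real.Gamma (x + 1 / 2))]

-- step lemma for the lower bound
lemma lower_step {y c : ℝ} (hy : 0 ≤ y) (hc : 0 ≤ c) (h : wF y ^ 2 ≤ y + 1 / 4 - c) :
    wF (y + 1) ^ 2 ≤ (y + 1) + 1 / 4 - (c * (y + 3 / 2) / (y + 1 / 2) + 1 / (16 * (y + 1 / 2) ^ 2)) := by
  have hrec := wF_rec hy
  have hd : (0:ℝ) < (y + 1 / 2) ^ 2 := by positivity
  have hd' : (0:ℝ) < y + 1 / 2 := by linarith
  have h1 : wF (y + 1) ^ 2 * (y + 1 / 2) ^ 2 ≤ (y + 1 / 4 - c) * (y + 1) ^ 2 := by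
    rw [hrec]
    exact mul_le_mul_of_nonneg_right h (by positivity)
  have e : ((y + 1) + 1 / 4 - (c * (y + 3 / 2) / (y + 1 / 2) + 1 / (16 * (y + 1 / 2) ^ 2)))
      * (y + 1 / 2) ^ 2
      = ((y + 1) + 1 / 4) * (y + 1 / 2) ^ 2 - c * (y + 3 / 2) * (y + 1 / 2) - 1 / 16 := by
    field_simp
    ring
  have key : (y + 1 / 4 - c) * (y + 1) ^ 2
      ≤ ((y + 1) + 1 / 4 - (c * (y + 3 / 2) / (y + 1 / 2) + 1 / (16 * (y + 1 / 2) ^ 2)))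
        * (y + 1 / 2) ^ 2 := by
    rw [e]
    nlinarith [hc, hd'.le]
  exact le_of_mul_le_mul_right (h1.trans key) hd

lemma wF_sq_gt_quarter {x : ℝ} (hx : 0 ≤ x) : x + 1 / 4 < wF x ^ 2 := by
  by_contra hcon
  push_neg at hcon
  set δ : ℝ := 1 / (16 * (x + 1 / 2) ^ 2) with hδ
  have hδpos : 0 < δ := by positivity
  have key : ∀ n : ℕ, wF (x + 1 + n) ^ 2 ≤ (x + 1 + n) + 1 / 4 - δ * (x + 3 / 2 + n) / (x + 3 / 2) := by
    intro n
    induction n with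
    | zero =>
      have h0 := lower_step hx le_rfl (show wF x ^ 2 ≤ x + 1 / 4 - 0 by linarith)
      have e0 : (0:ℝ) * (x + 3 / 2) / (x + 1 / 2) = 0 := by simp
      rw [e0, zero_add] at h0
      have e : δ * (x + 3 / 2 + (0:ℕ)) / (x + 3 / 2) = δ := by
        push_cast
        field_simp
        ring
      push_cast
      push_cast at e
      rw [e]
      push_cast
      simp only [add_zero]
      linarith [hδ]
    | succ n ih =>
      have hy : (0:ℝ) ≤ x + 1 + n := by positivity
      have hc : (0:ℝ) ≤ δ * (x + 3 / 2 + n) / (x + 3 / 2) := by positivity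
      have h := lower_step hy hc ih
      have e1 : x + 1 + (n + 1 : ℕ) = (x + 1 + n) + 1 := by push_cast; ring
      rw [e1]
      push_cast
      have e2 : δ * (x + 3 / 2 + n) / (x + 3 / 2) * (x + 1 + n + 3 / 2) / (x + 1 + n + 1 / 2)
          = δ * (x + 3 / 2 + (n + 1)) / (x + 3 / 2) := by
        have h1 : (x + 3 / 2 : ℝ) ≠ 0 := by positivity
        have h2 : (x + 1 + n + 1 / 2 : ℝ) ≠ 0 := by positivity
        field_simp
        ring
      calc wF (x + 1 + n + 1) ^ 2
          ≤ (x + 1 + n + 1) + 1 / 4 - (δ * (x + 3 / 2 + n) / (x + 3 / 2) * (x + 1 + n + 3 / 2) / (x + 1 + n + 1 / 2)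
            + 1 / (16 * (x + 1 + n + 1 / 2) ^ 2)) := h
        _ ≤ (x + 1 + n + 1) + 1 / 4 - δ * (x + 3 / 2 + (n + 1)) / (x + 3 / 2) := by
            rw [e2]; have : (0:ℝ) < 16 * (x + 1 + n + 1 / 2) ^ 2 := by positivity
            have := one_div_pos.mpr this
            linarith
  -- contradiction
  obtain ⟨n, hn⟩ := exists_nat_gt ((x + 3 / 2) / (4 * δ))
  have h1 := key n
  have h2 := wF_sq_ge (show (0:ℝ) < x + 1 + n by positivity)
  have h3 : δ * (x + 3 / 2 + n) / (x + 3 / 2) ≤ 1 / 4 := by linarith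
  have h4 : (x + 3 / 2) / (4 * δ) < x + 3 / 2 + n := by linarith [hn, (by positivity : (0:ℝ) ≤ x)]
  have h5 : 0 < x + 3 / 2 := by linarith
  rw [div_le_iff₀ h5] at h3
  rw [div_lt_iff₀ (by positivity)] at h4
  nlinarith

lemma wF_rec3 {y : ℝ} (hy : 0 ≤ y) :
    wF (y + 3) ^ 2 * ((y + 1 / 2) * (y + 3 / 2) * (y + 5 / 2)) ^ 2
      = wF y ^ 2 * ((y + 1) * (y + 2) * (y + 3)) ^ 2 := by
  have h1 := wF_rec hy
  have h2 := wF_rec (show (0:ℝ) ≤ y + 1 by linarith)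
  have h3 := wF_rec (show (0:ℝ) ≤ y + 2 by linarith)
  have e1 : y + 1 + 1 = y + 2 := by ring
  have e2 : y + 2 + 1 = y + 3 := by ring
  rw [e1] at h2; rw [e2] at h3
  have d1 : (0:ℝ) < (y + 1 + 1 / 2) ^ 2 := by positivity
  have d2 : (0:ℝ) < (y + 2 + 1 / 2) ^ 2 := by positivity
  linear_combination ((y + 1 / 2) * (y + 3 / 2)) ^ 2 * h3 + ((y + 3) * (y + 1 / 2)) ^ 2 * h2
    + ((y + 2) * (y + 3)) ^ 2 * h1

lemma upper_step3 {y ε : ℝ} (hy : 1 / 12 ≤ y) (hε : 0 ≤ ε)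
    (h : y + 1 / π + ε ≤ wF y ^ 2) :
    (y + 3) + 1 / π + ε * (y + 7 / 2) / (y + 1 / 2) ≤ wF (y + 3) ^ 2 := by
  have hy0 : (0:ℝ) ≤ y := by linarith
  have hrec := wF_rec3 hy0
  have hπ1 : π < 3.1416 := by linarith [Real.pi_lt_d6]
  have hπ2 : 3.1415 < π := by linarith [Real.pi_gt_d6]
  have hπ0 : (0:ℝ) < π := by linarith
  have hD : (0:ℝ) < ((y + 1 / 2) * (y + 3 / 2) * (y + 5 / 2)) ^ 2 := by positivity
  have hN : (0:ℝ) ≤ ((y + 1) * (y + 2) * (y + 3)) ^ 2 := by positivity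
  -- polynomial inequality (times π)
  have P : (π * y + 3 * π + 1) * ((y + 1 / 2) * (y + 3 / 2) * (y + 5 / 2)) ^ 2
      ≤ (π * y + 1) * ((y + 1) * (y + 2) * (y + 3)) ^ 2 := by
    nlinarith [sq_nonneg (y - 1 / 12), sq_nonneg y, mul_nonneg (sub_nonneg.mpr hy) (sq_nonneg y),
      mul_nonneg (mul_nonneg (sub_nonneg.mpr hy) (sub_nonneg.mpr hy)) (sq_nonneg y),
      mul_nonneg (sub_nonneg.mpr hy) (sq_nonneg (y*y)), sq_nonneg (y*y), sq_nonneg (y*y*y),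
      mul_nonneg (sub_nonneg.mpr hy) (sq_nonneg (y*y*y))]
  have P' : (y + 3 + 1 / π) * ((y + 1 / 2) * (y + 3 / 2) * (y + 5 / 2)) ^ 2
      ≤ (y + 1 / π) * ((y + 1) * (y + 2) * (y + 3)) ^ 2 := by
    rw [← mul_le_mul_iff_right₀ hπ0]
    calc π * ((y + 3 + 1 / π) * ((y + 1 / 2) * (y + 3 / 2) * (y + 5 / 2)) ^ 2)
        = (π * y + 3 * π + 1) * ((y + 1 / 2) * (y + 3 / 2) * (y + 5 / 2)) ^ 2 := by
          field_simp
      _ ≤ (π * y + 1) * ((y + 1) * (y + 2) * (y + 3)) ^ 2 := P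
      _ = π * ((y + 1 / π) * ((y + 1) * (y + 2) * (y + 3)) ^ 2) := by field_simp
  have eT : ε * (y + 7 / 2) / (y + 1 / 2) * ((y + 1 / 2) * (y + 3 / 2) * (y + 5 / 2)) ^ 2
      = ε * ((y + 7 / 2) * (y + 1 / 2) * ((y + 3 / 2) * (y + 5 / 2)) ^ 2) := by
    have h12 : (y + 1 / 2 : ℝ) ≠ 0 := by positivity
    field_simp
  have T : ε * (y + 7 / 2) / (y + 1 / 2) * ((y + 1 / 2) * (y + 3 / 2) * (y + 5 / 2)) ^ 2
      ≤ ε * ((y + 1) * (y + 2) * (y + 3)) ^ 2 := by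
    rw [eT]
    apply mul_le_mul_of_nonneg_left _ hε
    nlinarith [hy0, mul_nonneg hy0 hy0, mul_nonneg (mul_nonneg hy0 hy0) hy0,
      mul_nonneg (mul_nonneg (mul_nonneg hy0 hy0) hy0) hy0]
  have chain : ((y + 3) + 1 / π + ε * (y + 7 / 2) / (y + 1 / 2))
      * ((y + 1 / 2) * (y + 3 / 2) * (y + 5 / 2)) ^ 2
      ≤ wF (y + 3) ^ 2 * ((y + 1 / 2) * (y + 3 / 2) * (y + 5 / 2)) ^ 2 := by
    rw [hrec]
    calc ((y + 3) + 1 / π + ε * (y + 7 / 2) / (y + 1 / 2))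
        * ((y + 1 / 2) * (y + 3 / 2) * (y + 5 / 2)) ^ 2
        = (y + 3 + 1 / π) * ((y + 1 / 2) * (y + 3 / 2) * (y + 5 / 2)) ^ 2
          + ε * (y + 7 / 2) / (y + 1 / 2) * ((y + 1 / 2) * (y + 3 / 2) * (y + 5 / 2)) ^ 2 := by
          ring
      _ ≤ (y + 1 / π) * ((y + 1) * (y + 2) * (y + 3)) ^ 2
          + ε * ((y + 1) * (y + 2) * (y + 3)) ^ 2 := add_le_add P' T
      _ = (y + 1 / π + ε) * ((y + 1) * (y + 2) * (y + 3)) ^ 2 := by ring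
      _ ≤ wF y ^ 2 * ((y + 1) * (y + 2) * (y + 3)) ^ 2 :=
          mul_le_mul_of_nonneg_right h hN
  exact le_of_mul_le_mul_right chain hD

lemma upper_main_large {x : ℝ} (hx : 1 / 12 ≤ x) : wF x ^ 2 ≤ x + 1 / π := by
  by_contra hcon
  push_neg at hcon
  set ε : ℝ := wF x ^ 2 - x - 1 / π with hε
  have hεpos : 0 < ε := by
    have : (0:ℝ) < π := Real.pi_pos
    simp only [hε]
    linarith
  have hx0 : (0:ℝ) ≤ x := by linarith
  have hx12 : (0:ℝ) < x + 1 / 2 := by linarith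
  have key : ∀ n : ℕ, x + 3 * n + 1 / π + ε * (x + 3 * n + 1 / 2) / (x + 1 / 2)
      ≤ wF (x + 3 * n) ^ 2 := by
    intro n
    induction n with
    | zero =>
      push_cast
      simp only [mul_zero, add_zero]
      have e : ε * (x + 1 / 2) / (x + 1 / 2) = ε := by field_simp
      rw [e]
      linarith
    | succ n ih =>
      have hyn : 1 / 12 ≤ x + 3 * (n:ℝ) := by
        have : (0:ℝ) ≤ (n:ℝ) := Nat.cast_nonneg n
        linarith
      have hcn : (0:ℝ) ≤ ε * (x + 3 * n + 1 / 2) / (x + 1 / 2) := by positivity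
      have h := upper_step3 hyn hcn ih
      have e1 : x + 3 * ((n:ℝ) + 1) = (x + 3 * n) + 3 := by ring
      push_cast
      rw [e1]
      have e2 : ε * (x + 3 * n + 1 / 2) / (x + 1 / 2) * (x + 3 * n + 7 / 2) / (x + 3 * n + 1 / 2)
          = ε * ((x + 3 * n) + 3 + 1 / 2) / (x + 1 / 2) := by
        have h2 : (x + 3 * (n:ℝ) + 1 / 2 : ℝ) ≠ 0 := by positivity
        have h3 : (x + 1 / 2 : ℝ) ≠ 0 := by positivity
        field_simp
        ring
      rw [show (x + 3 * (n:ℝ)) + 3 + 1 / 2 = x + 3 * (n:ℝ) + 3 + 1 / 2 by ring] at e2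
      calc x + 3 * (n:ℝ) + 3 + 1 / π + ε * (x + 3 * (n:ℝ) + 3 + 1 / 2) / (x + 1 / 2)
          = (x + 3 * (n:ℝ)) + 3 + 1 / π
            + ε * (x + 3 * n + 1 / 2) / (x + 1 / 2) * (x + 3 * n + 7 / 2) / (x + 3 * n + 1 / 2) := by
            rw [e2]
        _ ≤ wF ((x + 3 * (n:ℝ)) + 3) ^ 2 := h
  obtain ⟨n, hn⟩ := exists_nat_gt ((x + 1 / 2) / (6 * ε))
  have h1 := key n
  have h2 := wF_sq_le (show (0:ℝ) ≤ x + 3 * n by positivity)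
  have hπ : (0:ℝ) < π := Real.pi_pos
  have h3 : ε * (x + 3 * n + 1 / 2) / (x + 1 / 2) ≤ 1 / 2 - 1 / π := by linarith
  have h4 : 1 / π > 0 := by positivity
  rw [div_le_iff₀ hx12] at h3
  rw [div_lt_iff₀ (by positivity : (0:ℝ) < 6 * ε)] at hn
  nlinarith [hεpos, hx12, hn, h4, mul_pos hεpos hx12]

lemma hlog_deriv (c : ℝ) {x : ℝ} (h : 0 < x + c) :
    HasDerivAt (fun y => Real.log (y + c)) ((x + c)⁻¹) x := by
  have h1 : HasDerivAt (fun y : ℝ => y + c) 1 x := (hasDerivAt_id x).add_const c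
  simpa [Function.comp_def] using (Real.hasDerivAt_log h.ne').comp x h1

lemma hinv_deriv (c : ℝ) {x : ℝ} (h : 0 < x + c) :
    HasDerivAt (fun y => (y + c)⁻¹) (-((x + c) ^ 2)⁻¹) x := by
  have h1 : HasDerivAt (fun y : ℝ => y + c) 1 x := (hasDerivAt_id x).add_const c
  simpa [Function.comp_def] using (hasDerivAt_inv h.ne').comp x h1

lemma convex_log_sub {a b : ℝ} (hb : 0 < b) (hab : b ≤ a) :
    ConvexOn ℝ (Set.Ici (0:ℝ)) (fun x => Real.log (x + a) - Real.log (x + b)) := by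
  have ha : 0 < a := lt_of_lt_of_le hb hab
  have hmem : ∀ x : ℝ, x ∈ interior (Set.Ici (0:ℝ)) → 0 < x := by
    intro x hx
    rwa [interior_Ici, Set.mem_Ioi] at hx
  apply convexOn_of_hasDerivWithinAt2_nonneg (convex_Ici 0)
    (f' := fun x => (x + a)⁻¹ - (x + b)⁻¹)
    (f'' := fun x => -((x + a) ^ 2)⁻¹ - -((x + b) ^ 2)⁻¹)
  · intro x hx
    have hx0 : (0:ℝ) ≤ x := hx
    exact (((hlog_deriv a (by linarith)).sub (hlog_deriv b (by linarith))).continuousAt).continuousWithinAt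
  · intro x hx
    have hx0 : 0 < x := hmem x hx
    exact (((hlog_deriv a (by linarith)).sub (hlog_deriv b (by linarith))).hasDerivWithinAt)
  · intro x hx
    have hx0 : 0 < x := hmem x hx
    exact (((hinv_deriv a (by linarith)).sub (hinv_deriv b (by linarith))).hasDerivWithinAt)
  · intro x hx
    have hx0 : 0 < x := hmem x hx
    have h1 : (0:ℝ) < (x + b) ^ 2 := by positivity
    have h2 : (x + b) ^ 2 ≤ (x + a) ^ 2 := by nlinarith
    have := one_div_le_one_div_of_le h1 h2
    simp only [one_div] at this
    linarith

lemma convex_term (m : ℕ) : ConvexOn ℝ (Set.Ici (0:ℝ))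
    (fun z : ℝ => Real.log (z + 1 + m) - Real.log (z + 1 / 2 + m)) := by
  have h := convex_log_sub (show (0:ℝ) < 1 / 2 + m by positivity)
    (show (1 / 2 + (m:ℝ)) ≤ 1 + m by linarith)
  simpa only [← add_assoc] using h

lemma watsonConvexSum (n : ℕ) : ConvexOn ℝ (Set.Ici (0:ℝ))
    (fun z : ℝ => ∑ m ∈ Finset.range n, (Real.log (z + 1 + m) - Real.log (z + 1 / 2 + m))) := by
  induction n with
  | zero => simpa using convexOn_const (0:ℝ) (convex_Ici (0:ℝ))
  | succ n ih =>
    have h := ih.add (convex_term n)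
    refine h.congr fun z hz => ?_
    simp only [Finset.sum_range_succ, Pi.add_apply]

lemma convex_gseq (n : ℕ) : ConvexOn ℝ (Set.Ici (0:ℝ))
    (fun z : ℝ => Real.BohrMollerup.logGammaSeq (z + 1 / 2) n
      - Real.BohrMollerup.logGammaSeq (z + 1) n) := by
  have h := ((watsonConvexSum (n + 1)).add (convexOn_const (-(1 / 2) * Real.log n) (convex_Ici (0:ℝ))))
  apply h.congr
  intro z hz
  simp only [Real.BohrMollerup.logGammaSeq, Finset.sum_sub_distrib, Pi.add_apply]
  ring

lemma convex_ell : ConvexOn ℝ (Set.Ici (0:ℝ))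
    (fun x => Real.log (Real.Gamma (x + 1 / 2)) - Real.log (Real.Gamma (x + 1))) := by
  refine ⟨convex_Ici 0, fun p hp q hq a b ha hb hab => ?_⟩
  simp only [smul_eq_mul]
  have hp' : (0:ℝ) ≤ p := hp
  have hq' : (0:ℝ) ≤ q := hq
  have hmem : 0 ≤ a * p + b * q := by positivity
  have tend : ∀ z : ℝ, 0 ≤ z → Tendsto
      (fun n : ℕ => Real.BohrMollerup.logGammaSeq (z + 1 / 2) n
        - Real.BohrMollerup.logGammaSeq (z + 1) n) atTop
      (𝓝 (Real.log (Real.Gamma (z + 1 / 2)) - Real.log (Real.Gamma (z + 1)))) := by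
    intro z hz
    exact (Real.BohrMollerup.tendsto_log_gamma (by linarith)).sub
      (Real.BohrMollerup.tendsto_log_gamma (by linarith))
  refine le_of_tendsto_of_tendsto' (tend _ hmem)
    (((tend p hp').const_mul a).add ((tend q hq').const_mul b)) (fun n => ?_)
  have h := (convex_gseq n).2 hp hq ha hb hab
  simpa only [smul_eq_mul] using h


lemma ell_hasDeriv : HasDerivAt
    (fun x : ℝ => Real.log (Real.Gamma (x + 1 / 2)) - Real.log (Real.Gamma (x + 1)))
    (-(2 * Real.log 2)) 0 := by
  have h1 : HasDerivAt (fun x : ℝ => Real.Gamma (x + 1 / 2))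
      (-Real.sqrt π * (Real.eulerMascheroniConstant + 2 * Real.log 2)) 0 := by
    apply HasDerivAt.comp_add_const 0 (1 / 2)
    rw [show (0:ℝ) + 1 / 2 = 1 / 2 by norm_num]
    exact Real.hasDerivAt_Gamma_one_half
  have h2 : HasDerivAt (fun x : ℝ => Real.Gamma (x + 1))
      (-Real.eulerMascheroniConstant) 0 := by
    apply HasDerivAt.comp_add_const 0 1
    rw [show (0:ℝ) + 1 = 1 by norm_num]
    exact Real.hasDerivAt_Gamma_one
  have hne1 : Real.Gamma ((0:ℝ) + 1 / 2) ≠ 0 := by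
    rw [show (0:ℝ) + 1 / 2 = 1 / 2 by norm_num, Real.Gamma_one_half_eq]
    positivity
  have hne2 : Real.Gamma ((0:ℝ) + 1) ≠ 0 := by
    rw [show (0:ℝ) + 1 = 1 by norm_num, Real.Gamma_one]
    norm_num
  have h := (h1.log hne1).sub (h2.log hne2)
  refine h.congr_deriv ?_
  rw [show (0:ℝ) + 1 / 2 = 1 / 2 by norm_num, show (0:ℝ) + 1 = 1 by norm_num,
    Real.Gamma_one_half_eq, Real.Gamma_one]
  have hs : Real.sqrt π ≠ 0 := by positivity
  field_simp
  ring

lemma ell_tangent {x : ℝ} (hx : 0 < x) :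
    Real.log (Real.sqrt π) - 2 * Real.log 2 * x
      ≤ Real.log (Real.Gamma (x + 1 / 2)) - Real.log (Real.Gamma (x + 1)) := by
  have h := convex_ell.le_slope_of_hasDerivAt (Set.self_mem_Ici)
    (Set.mem_Ici.mpr hx.le) hx ell_hasDeriv
  rw [slope_def_field] at h
  have e0 : Real.log (Real.Gamma ((0:ℝ) + 1 / 2)) - Real.log (Real.Gamma ((0:ℝ) + 1))
      = Real.log (Real.sqrt π) := by
    rw [show (0:ℝ) + 1 / 2 = 1 / 2 by norm_num, show (0:ℝ) + 1 = 1 by norm_num,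
      Real.Gamma_one_half_eq, Real.Gamma_one, Real.log_one, sub_zero]
  rw [e0] at h
  rw [sub_zero] at h
  rw [le_div_iff₀ hx] at h
  linarith

lemma exp_chord {x : ℝ} (hx0 : 0 ≤ x) (hx : x ≤ 1 / 12) :
    Real.exp (4 * Real.log 2 * x) ≤ 1 + π * x := by
  set s : ℝ := 12 * x with hs
  have hs0 : 0 ≤ s := by positivity
  have hs1 : s ≤ 1 := by rw [hs]; linarith
  have hc := convexOn_exp.2 (Set.mem_univ (0:ℝ)) (Set.mem_univ (Real.log 2 / 3))
    (by linarith : (0:ℝ) ≤ 1 - s) hs0 (by ring)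
  simp only [smul_eq_mul, mul_zero, zero_add, Real.exp_zero] at hc
  have e : s * (Real.log 2 / 3) = 4 * Real.log 2 * x := by rw [hs]; ring
  rw [e] at hc
  have hT : Real.exp (Real.log 2 / 3) ≤ 1 + π / 12 := by
    by_contra hcon
    push_neg at hcon
    have h3 : (1 + π / 12) ^ 3 < (Real.exp (Real.log 2 / 3)) ^ 3 := by
      apply pow_lt_pow_left₀ hcon (by positivity) (by norm_num)
    have he : (Real.exp (Real.log 2 / 3)) ^ 3 = 2 := by
      rw [← Real.exp_nat_mul]
      norm_num
      rw [show (3:ℝ) * (Real.log 2 / 3) = Real.log 2 by ring, Real.exp_log (by norm_num)]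
    rw [he] at h3
    have hπ : 3.141592 < π := Real.pi_gt_d6
    have hq : (0.2617993:ℝ) ≤ π / 12 := by linarith
    have hq2 : (0.2617993:ℝ) ^ 2 ≤ (π / 12) ^ 2 := by nlinarith
    have hq3 : (0.2617993:ℝ) ^ 3 ≤ (π / 12) ^ 3 := by nlinarith
    nlinarith [hq, hq2, hq3]
  calc Real.exp (4 * Real.log 2 * x) ≤ (1 - s) * 1 + s * Real.exp (Real.log 2 / 3) := hc
    _ ≤ (1 - s) * 1 + s * (1 + π / 12) := by nlinarith
    _ = 1 + π * x := by rw [hs]; ring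


lemma upper_main_small {x : ℝ} (hx0 : 0 ≤ x) (hx : x ≤ 1 / 12) : wF x ^ 2 ≤ x + 1 / π := by
  rcases eq_or_lt_of_le hx0 with h0 | hxpos
  · rw [← h0]
    have e : wF 0 = 1 / Real.sqrt π := by
      unfold wF
      rw [zero_add, zero_add, Real.Gamma_one, Real.Gamma_one_half_eq]
    rw [e, div_pow, one_pow, Real.sq_sqrt Real.pi_pos.le, zero_add]
  · have hΓ1 : 0 < Real.Gamma (x + 1) := Real.Gamma_pos_of_pos (by linarith)
    have hΓ2 : 0 < Real.Gamma (x + 1 / 2) := Real.Gamma_pos_of_pos (by linarith)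
    have hwpos : 0 < wF x := wF_pos hx0
    have hsq : (0:ℝ) < Real.sqrt π := Real.sqrt_pos.mpr Real.pi_pos
    have key : wF x ≤ Real.exp (2 * Real.log 2 * x) / Real.sqrt π := by
      rw [← Real.exp_log hwpos]
      have hlw : Real.log (wF x)
          = Real.log (Real.Gamma (x + 1)) - Real.log (Real.Gamma (x + 1 / 2)) :=
        Real.log_div hΓ1.ne' hΓ2.ne'
      have h2 : Real.log (wF x) ≤ 2 * Real.log 2 * x - Real.log (Real.sqrt π) := by
        rw [hlw]; linarith [ell_tangent hxpos]
      calc Real.exp (Real.log (wF x)) ≤ Real.exp (2 * Real.log 2 * x - Real.log (Real.sqrt π)) :=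
            Real.exp_le_exp.mpr h2
        _ = Real.exp (2 * Real.log 2 * x) / Real.sqrt π := by
            rw [Real.exp_sub, Real.exp_log hsq]
    have key2 : wF x ^ 2 ≤ Real.exp (4 * Real.log 2 * x) / π := by
      calc wF x ^ 2 ≤ (Real.exp (2 * Real.log 2 * x) / Real.sqrt π) ^ 2 :=
            pow_le_pow_left₀ hwpos.le key 2
        _ = Real.exp (2 * Real.log 2 * x) ^ 2 / π := by
            rw [div_pow, Real.sq_sqrt Real.pi_pos.le]
        _ = Real.exp (4 * Real.log 2 * x) / π := by
            rw [← Real.exp_nat_mul]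
            norm_num
            ring_nf
    have key3 : Real.exp (4 * Real.log 2 * x) / π ≤ x + 1 / π := by
      rw [div_le_iff₀ Real.pi_pos]
      have := exp_chord hx0 hx
      have e : (x + 1 / π) * π = π * x + 1 := by field_simp
      rw [e]
      linarith
    linarith

/-- Watson's inequality: for all `x ≥ 0`,
`√(x + 1/4) < Γ(x+1)/Γ(x+1/2) ≤ √(x + 1/π) < √(x + 1/2)`. -/
theorem watson_inequality (x : ℝ) (hx : 0 ≤ x) :
    Real.sqrt (x + 1 / 4) < Real.Gamma (x + 1) / Real.Gamma (x + 1 / 2) ∧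
    Real.Gamma (x + 1) / Real.Gamma (x + 1 / 2) ≤ Real.sqrt (x + 1 / Real.pi) ∧
    Real.sqrt (x + 1 / Real.pi) < Real.sqrt (x + 1 / 2) := by
  have hwf : Real.Gamma (x + 1) / Real.Gamma (x + 1 / 2) = wF x := rfl
  have hpos := wF_pos hx
  have hlow := wF_sq_gt_quarter hx
  have hup : wF x ^ 2 ≤ x + 1 / π := by
    rcases le_total x (1 / 12) with h | h
    · exact upper_main_small hx h
    · exact upper_main_large h
  have hπ2 : (2:ℝ) < π := by linarith [Real.pi_gt_d6]
  refine ⟨?_, ?_, ?_⟩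
  · rw [hwf]
    exact (Real.sqrt_lt' hpos).mpr hlow
  · rw [hwf]
    have hy : (0:ℝ) ≤ x + 1 / π := by
      have := Real.pi_pos
      positivity
    exact (Real.le_sqrt hpos.le hy).mpr hup
  · apply Real.sqrt_lt_sqrt
    · have : (0:ℝ) < π := Real.pi_pos
      positivity
    · have h1 : 1 / π < 1 / 2 := by
        rw [div_lt_div_iff₀ Real.pi_pos (by norm_num : (0:ℝ) < 2)]
        linarith
      linarith
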